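/- arXiv:2009.02179 — 3 statements merged into one kernel-verified Lean document; each statement's English description precedes it below -/
import Mathlib

section
/- No realization of the triangular prism is balanced: if v_1,…,v_6 ∈ ℝ^3 affinely span ℝ^3 and are connected according to the edge-graph of the triangular prism, then there is no θ ∈ ℝ with Σ_{j∈N(i)} v_j = θ v_i for all i. -/
open Finset

/-- The edge list of the triangular prism: two triangles `{0,1,2}` and `{3,4,5}`
joined by the edges `03`, `14`, `25`. -/
def prismEdges : List (Fin 6 × Fin 6) :=
  [(0,1), (1,2), (0,2), (3,4), (4,5), (3,5), (0,3), (1,4), (2,5)]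

/-- The edge-graph of the triangular prism. -/
def prismGraph : SimpleGraph (Fin 6) where
  Adj i j := (i, j) ∈ prismEdges ∨ (j, i) ∈ prismEdges
  symm := ⟨by intro i j h; revert h; revert i j; beta_reduce; decide⟩
  loopless := ⟨by intro i; revert i; beta_reduce; decide⟩

instance : DecidableRel prismGraph.Adj :=
  fun _ _ => inferInstanceAs (Decidable (_ ∨ _))

/-- No realization of the triangular prism is balanced: if `v 0, …, v 5 ∈ ℝ³`
affinely span `ℝ³` and are connected according to the edge-graph of the
triangular prism, then there is no `θ ∈ ℝ` with
`∑_{j ∈ N(i)} v j = θ • v i` for all `i`. -/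
theorem prism_not_balanced
    (v : Fin 6 → Fin 3 → ℝ)
    (hspan : affineSpan ℝ (Set.range v) = ⊤) :
    ¬ ∃ θ : ℝ, ∀ i : Fin 6,
        ∑ j ∈ prismGraph.neighborFinset i, v j = θ • v i := by
  rintro ⟨θ, h⟩
  have e0 : v 1 + v 2 + v 3 = θ • v 0 := by
    have := h 0
    rw [show prismGraph.neighborFinset 0 = {1,2,3} by decide,
      Finset.sum_insert (by decide), Finset.sum_insert (by decide),
      Finset.sum_singleton] at this
    rwa [← add_assoc] at this
  have e1 : v 0 + v 2 + v 4 = θ • v 1 := by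
    have := h 1
    rw [show prismGraph.neighborFinset 1 = {0,2,4} by decide,
      Finset.sum_insert (by decide), Finset.sum_insert (by decide),
      Finset.sum_singleton] at this
    rwa [← add_assoc] at this
  have e2 : v 0 + v 1 + v 5 = θ • v 2 := by
    have := h 2
    rw [show prismGraph.neighborFinset 2 = {0,1,5} by decide,
      Finset.sum_insert (by decide), Finset.sum_insert (by decide),
      Finset.sum_singleton] at this
    rwa [← add_assoc] at this
  have e3 : v 0 + v 4 + v 5 = θ • v 3 := by
    have := h 3
    rw [show prismGraph.neighborFinset 3 = {0,4,5} by decide,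
      Finset.sum_insert (by decide), Finset.sum_insert (by decide),
      Finset.sum_singleton] at this
    rwa [← add_assoc] at this
  have e4 : v 1 + v 3 + v 5 = θ • v 4 := by
    have := h 4
    rw [show prismGraph.neighborFinset 4 = {1,3,5} by decide,
      Finset.sum_insert (by decide), Finset.sum_insert (by decide),
      Finset.sum_singleton] at this
    rwa [← add_assoc] at this
  have e5 : v 2 + v 3 + v 4 = θ • v 5 := by
    have := h 5
    rw [show prismGraph.neighborFinset 5 = {2,3,4} by decide,
      Finset.sum_insert (by decide), Finset.sum_insert (by decide),
      Finset.sum_singleton] at this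
    rwa [← add_assoc] at this
  -- scalar versions
  have c0 : ∀ k, v 1 k + v 2 k + v 3 k = θ * v 0 k := fun k => by
    have := congrFun e0 k; simpa using this
  have c1 : ∀ k, v 0 k + v 2 k + v 4 k = θ * v 1 k := fun k => by
    have := congrFun e1 k; simpa using this
  have c2 : ∀ k, v 0 k + v 1 k + v 5 k = θ * v 2 k := fun k => by
    have := congrFun e2 k; simpa using this
  have c3 : ∀ k, v 0 k + v 4 k + v 5 k = θ * v 3 k := fun k => by
    have := congrFun e3 k; simpa using this
  have c4 : ∀ k, v 1 k + v 3 k + v 5 k = θ * v 4 k := fun k => by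
    have := congrFun e4 k; simpa using this
  have c5 : ∀ k, v 2 k + v 3 k + v 4 k = θ * v 5 k := fun k => by
    have := congrFun e5 k; simpa using this
  -- every v i is a combination of v 0 and v 1
  have key : ∀ i : Fin 6, ∃ a b : ℝ, ∀ k, v i k = a * v 0 k + b * v 1 k := by
    have key2345 : (∃ a b : ℝ, ∀ k, v 2 k = a * v 0 k + b * v 1 k) ∧
        (∃ a b : ℝ, ∀ k, v 3 k = a * v 0 k + b * v 1 k) ∧
        (∃ a b : ℝ, ∀ k, v 4 k = a * v 0 k + b * v 1 k) ∧
        (∃ a b : ℝ, ∀ k, v 5 k = a * v 0 k + b * v 1 k) := by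
      by_cases hθ0 : θ = 0
      · subst hθ0
        refine ⟨⟨-1, -1, fun k => ?_⟩, ⟨1, 0, fun k => ?_⟩,
          ⟨0, 1, fun k => ?_⟩, ⟨-1, -1, fun k => ?_⟩⟩ <;>
          · have := c0 k; have := c1 k; have := c2 k; have := c3 k
            have := c4 k; have := c5 k; linarith
      · by_cases hθ2 : θ = -2
        · subst hθ2
          refine ⟨⟨-1, -1, fun k => ?_⟩, ⟨-1, 0, fun k => ?_⟩,
            ⟨0, -1, fun k => ?_⟩, ⟨1, 1, fun k => ?_⟩⟩ <;>
            · have := c0 k; have := c1 k; have := c2 k; have := c3 k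
              have := c4 k; have := c5 k; linarith
        · have hne : θ * (θ + 2) ≠ 0 :=
            mul_ne_zero hθ0 (by intro hc; apply hθ2; linarith)
          have h01 : ∀ k, v 0 k = v 1 k := by
            intro k
            have hz : θ * (θ + 2) * (v 0 k - v 1 k) = 0 := by
              linear_combination (-(1+θ)) * c0 k + (1+θ) * c1 k - c3 k + c4 k
            rcases mul_eq_zero.1 hz with hc | hc
            · exact absurd hc hne
            · linarith
          have h12 : ∀ k, v 1 k = v 2 k := by
            intro k
            have hz : θ * (θ + 2) * (v 1 k - v 2 k) = 0 := by
              linear_combination (-(1+θ)) * c1 k + (1+θ) * c2 k - c4 k + c5 k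
            rcases mul_eq_zero.1 hz with hc | hc
            · exact absurd hc hne
            · linarith
          have h34 : ∀ k, v 3 k = v 4 k := by
            intro k
            have hz : θ * (θ + 2) * (v 3 k - v 4 k) = 0 := by
              linear_combination (-(1+θ)) * c3 k + (1+θ) * c4 k - c0 k + c1 k
            rcases mul_eq_zero.1 hz with hc | hc
            · exact absurd hc hne
            · linarith
          have h45 : ∀ k, v 4 k = v 5 k := by
            intro k
            have hz : θ * (θ + 2) * (v 4 k - v 5 k) = 0 := by
              linear_combination (-(1+θ)) * c4 k + (1+θ) * c5 k - c1 k + c2 k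
            rcases mul_eq_zero.1 hz with hc | hc
            · exact absurd hc hne
            · linarith
          have h3 : ∀ k, v 3 k = (θ - 2) * v 0 k := by
            intro k
            have := c0 k
            have h01k := h01 k; have h12k := h12 k
            linarith
          exact ⟨⟨1, 0, fun k => by rw [← h12 k, ← h01 k]; ring⟩,
            ⟨θ - 2, 0, fun k => by rw [h3 k]; ring⟩,
            ⟨θ - 2, 0, fun k => by rw [← h34 k, h3 k]; ring⟩,
            ⟨θ - 2, 0, fun k => by rw [← h45 k, ← h34 k, h3 k]; ring⟩⟩
    obtain ⟨k2, k3, k4, k5⟩ := key2345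
    intro i
    fin_cases i
    · exact ⟨1, 0, fun k => by show v 0 k = 1 * v 0 k + 0 * v 1 k; ring⟩
    · exact ⟨0, 1, fun k => by show v 1 k = 0 * v 0 k + 1 * v 1 k; ring⟩
    · exact k2
    · exact k3
    · exact k4
    · exact k5
  set p : Submodule ℝ (Fin 3 → ℝ) := Submodule.span ℝ {v 0, v 1} with hp
  have hin : ∀ i, v i ∈ p := by
    intro i
    obtain ⟨a, b, hab⟩ := key i
    have : v i = a • v 0 + b • v 1 := funext fun k => by simpa using hab k
    rw [this]
    exact Submodule.add_mem _
      (Submodule.smul_mem _ _ (Submodule.subset_span (by simp)))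
      (Submodule.smul_mem _ _ (Submodule.subset_span (by simp)))
  have hvs : vectorSpan ℝ (Set.range v) = ⊤ :=
    AffineSubspace.vectorSpan_eq_top_of_affineSpan_eq_top ℝ _ _ hspan
  have hle : vectorSpan ℝ (Set.range v) ≤ p := by
    rw [vectorSpan_def]
    refine Submodule.span_le.2 ?_
    rintro x ⟨a, ⟨i, rfl⟩, b, ⟨j, rfl⟩, rfl⟩
    exact Submodule.sub_mem _ (hin i) (hin j)
  have htop : p = ⊤ := top_unique (hvs ▸ hle)
  have hfr : Module.finrank ℝ p ≤ 2 := by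
    refine (finrank_span_le_card _).trans ?_
    rw [Set.toFinset_insert, Set.toFinset_singleton]
    exact (Finset.card_insert_le _ _).trans (by simp)
  rw [htop, finrank_top] at hfr
  have h3 : Module.finrank ℝ (Fin 3 → ℝ) = 3 := by simp
  omega
end

section
/- Let G be a graph and suppose, for the second-largest eigenvalue θ₂ whose eigenspace is spanned by the columns of Φ with rows v_i ∈ ℝ^d: (a) for each vertex i there is a θ₂-eigenvector whose strictly unique largest component is at i, and (b) vertices i ≠ j are adjacent iff there is a θ₂-eigenvector whose set of maximal components is exactly {i, j}. Then the map i ↦ v_i is a graph isomorphism from G onto the skeleton of P_G(θ₂) = conv{v_1,…,v_n}: the v_i are n distinct vertices of the polytope, and conv{v_i, v_j} is an edge of the polytope iff ij is an edge of G. -/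
open Matrix Module Set

/-- dot product with a fixed vector, as a continuous linear map. -/
noncomputable def dotCLM {d : ℕ} (x : Fin d → ℝ) : (Fin d → ℝ) →L[ℝ] ℝ :=
  LinearMap.toContinuousLinearMap
    { toFun := fun p => p ⬝ᵥ x
      map_add' := fun a b => add_dotProduct a b x
      map_smul' := fun c a => by simp [smul_dotProduct, smul_eq_mul] }

@[simp] lemma dotCLM_apply {d : ℕ} (x p : Fin d → ℝ) : dotCLM x p = p ⬝ᵥ x := rfl

/-- if a center of mass of points of a convex set `P` lies in an extreme subset `S`,
then every point with positive weight lies in `S`. -/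
lemma extreme_centerMass {E : Type*} [AddCommGroup E] [Module ℝ E]
    {P S : Set E} (hP : Convex ℝ P) (hS : IsExtreme ℝ P S)
    {ι : Type*} (t : Finset ι) (w : ι → ℝ) (z : ι → E)
    (hw : ∀ i ∈ t, 0 ≤ w i) (hpos : 0 < ∑ i ∈ t, w i)
    (hz : ∀ i ∈ t, z i ∈ P) (hq : t.centerMass w z ∈ S) :
    ∀ i ∈ t, 0 < w i → z i ∈ S := by
  classical
  induction t using Finset.induction_on with
  | empty => simp at hpos
  | @insert a s ha ih =>
    by_cases hsz : ∑ j ∈ s, w j = 0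
    · have hall : ∀ j ∈ s, w j = 0 :=
        (Finset.sum_eq_zero_iff_of_nonneg
          (fun j hj => hw j (Finset.mem_insert_of_mem hj))).1 hsz
      have hwa : 0 < w a := by
        have := hpos
        rw [Finset.sum_insert ha, hsz, add_zero] at this
        exact this
      have hca : (insert a s).centerMass w z = z a := by
        rw [Finset.centerMass, Finset.sum_insert ha, Finset.sum_insert ha, hsz, add_zero,
          Finset.sum_eq_zero (fun j hj => by rw [hall j hj, zero_smul]), add_zero,
          smul_smul, inv_mul_cancel₀ (ne_of_gt hwa), one_smul]
      intro i hi hwi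
      rcases Finset.mem_insert.1 hi with rfl | hi'
      · rw [← hca]; exact hq
      · exact absurd (hall i hi') (ne_of_gt hwi)
    · have hspos : 0 < ∑ j ∈ s, w j :=
        lt_of_le_of_ne (Finset.sum_nonneg fun j hj => hw j (Finset.mem_insert_of_mem hj))
          (Ne.symm hsz)
      by_cases hwa : w a = 0
      · have hce : (insert a s).centerMass w z = s.centerMass w z := by
          rw [Finset.centerMass, Finset.centerMass, Finset.sum_insert ha,
            Finset.sum_insert ha, hwa, zero_add, zero_smul, zero_add]
        intro i hi hwi
        rcases Finset.mem_insert.1 hi with rfl | hi'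
        · exact absurd hwa (ne_of_gt hwi)
        · exact ih (fun j hj => hw j (Finset.mem_insert_of_mem hj)) hspos
            (fun j hj => hz j (Finset.mem_insert_of_mem hj)) (hce ▸ hq) i hi' hwi
      · have hwapos : 0 < w a :=
          lt_of_le_of_ne (hw a (Finset.mem_insert_self a s)) (Ne.symm hwa)
        have htot : 0 < w a + ∑ j ∈ s, w j := by linarith
        have hrP : s.centerMass w z ∈ P := by
          have := Finset.centerMass_mem_convexHull s
            (fun j hj => hw j (Finset.mem_insert_of_mem hj)) hspos
            (fun j hj => hz j (Finset.mem_insert_of_mem hj))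
          rwa [hP.convexHull_eq] at this
        have hopen : (insert a s).centerMass w z ∈ openSegment ℝ (z a) (s.centerMass w z) := by
          rw [Finset.centerMass_insert a s z ha hsz]
          exact ⟨w a / (w a + ∑ j ∈ s, w j), (∑ j ∈ s, w j) / (w a + ∑ j ∈ s, w j),
            by positivity, by positivity, by field_simp, rfl⟩
        have hmem := And.intro (hS.2 (hz a (Finset.mem_insert_self a s)) hrP hq hopen)
          (hS.right_mem_of_mem_openSegment (hz a (Finset.mem_insert_self a s)) hrP hq hopen)
        intro i hi hwi
        rcases Finset.mem_insert.1 hi with rfl | hi'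
        · exact hmem.1
        · exact ih (fun j hj => hw j (Finset.mem_insert_of_mem hj)) hspos
            (fun j hj => hz j (Finset.mem_insert_of_mem hj)) hmem.2 i hi' hwi
section Face

variable {n d : ℕ}

lemma face_eq (Φ : Matrix (Fin n) (Fin d) ℝ) (x : Fin d → ℝ) (i₀ : Fin n)
    (hmax : ∀ k, Φ.mulVec x k ≤ Φ.mulVec x i₀) :
    {p ∈ convexHull ℝ (Set.range fun i : Fin n => Φ i) |
        ∀ q ∈ convexHull ℝ (Set.range fun i : Fin n => Φ i), dotCLM x q ≤ dotCLM x p}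
      = convexHull ℝ ((fun i : Fin n => Φ i) '' {k | Φ.mulVec x k = Φ.mulVec x i₀}) := by
  classical
  set v : Fin n → (Fin d → ℝ) := fun i => Φ i with hv
  set M : ℝ := Φ.mulVec x i₀ with hM
  have hdot : ∀ k : Fin n, dotCLM x (v k) = Φ.mulVec x k := fun k => rfl
  have hlin : IsLinearMap ℝ (fun y : Fin d → ℝ => dotCLM x y) :=
    ⟨fun a b => map_add _ a b, fun c a => map_smul _ c a⟩
  have hPle : ∀ q ∈ convexHull ℝ (Set.range v), dotCLM x q ≤ M := by
    intro q hq
    have hsub : convexHull ℝ (Set.range v) ⊆ {y | dotCLM x y ≤ M} := by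
      apply convexHull_min
      · rintro _ ⟨k, rfl⟩
        rw [Set.mem_setOf_eq, hdot k]
        exact hmax k
      · exact convex_halfSpace_le hlin M
    exact hsub hq
  apply Set.Subset.antisymm
  · rintro p ⟨hpP, hpmax⟩
    have hpM : dotCLM x p = M := by
      refine le_antisymm (hPle p hpP) ?_
      have := hpmax (v i₀) (subset_convexHull ℝ _ (Set.mem_range_self i₀))
      rwa [hdot i₀, ← hM] at this
    rw [convexHull_eq] at hpP
    obtain ⟨ι, t, wt, z, hw0, hw1, hzr, hcm⟩ := hpP
    have hzle : ∀ a ∈ t, dotCLM x (z a) ≤ M := by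
      intro a hat
      obtain ⟨k, hk⟩ := hzr a hat
      rw [← hk, hdot k]; exact hmax k
    have hlp : dotCLM x p = ∑ a ∈ t, wt a * dotCLM x (z a) := by
      rw [← hcm, Finset.centerMass_eq_of_sum_1 _ _ hw1, map_sum]
      simp [smul_eq_mul]
    have hsum0 : ∑ a ∈ t, wt a * (M - dotCLM x (z a)) = 0 := by
      have heq : ∑ a ∈ t, wt a * (M - dotCLM x (z a))
          = (∑ a ∈ t, wt a) * M - ∑ a ∈ t, wt a * dotCLM x (z a) := by
        rw [Finset.sum_mul, ← Finset.sum_sub_distrib]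
        exact Finset.sum_congr rfl fun a _ => by ring
      rw [heq, hw1, one_mul, ← hlp, hpM, sub_self]
    have hkey : ∀ a ∈ t, wt a ≠ 0 → z a ∈ v '' {k | Φ.mulVec x k = M} := by
      intro a hat hne
      have hterm : wt a * (M - dotCLM x (z a)) = 0 :=
        (Finset.sum_eq_zero_iff_of_nonneg (fun b hbt =>
          mul_nonneg (hw0 b hbt) (sub_nonneg.2 (hzle b hbt)))).1 hsum0 a hat
      have hMz : dotCLM x (z a) = M := by
        rcases mul_eq_zero.1 hterm with h | h
        · exact absurd h hne
        · linarith [sub_eq_zero.1 h]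
      obtain ⟨k, hk⟩ := hzr a hat
      refine ⟨k, ?_, hk⟩
      rw [Set.mem_setOf_eq, ← hdot k, hk, hMz]
    have hfil : ∑ a ∈ t.filter (fun a => wt a ≠ 0), wt a = 1 := by
      rw [Finset.sum_filter_ne_zero, hw1]
    rw [← hcm, ← Finset.centerMass_filter_ne_zero]
    exact Finset.centerMass_mem_convexHull _
      (fun a hat => hw0 a (Finset.mem_of_mem_filter a hat))
      (by rw [hfil]; norm_num)
      (fun a hat => hkey a (Finset.mem_of_mem_filter a hat) (Finset.mem_filter.1 hat).2)
  · intro q hq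
    have hqP : q ∈ convexHull ℝ (Set.range v) :=
      convexHull_mono (Set.image_subset_range v _) hq
    have hqM : dotCLM x q = M := by
      refine le_antisymm (hPle q hqP) ?_
      have hsub : convexHull ℝ (v '' {k | Φ.mulVec x k = M}) ⊆ {y | M ≤ dotCLM x y} := by
        apply convexHull_min
        · rintro _ ⟨k, hk, rfl⟩
          rw [Set.mem_setOf_eq, hdot k, hk]
        · exact convex_halfSpace_ge hlin M
      exact hsub hq
    exact ⟨hqP, fun r hr => by rw [hqM]; exact hPle r hr⟩

lemma face_isExtreme (Φ : Matrix (Fin n) (Fin d) ℝ) (x : Fin d → ℝ) (i₀ : Fin n)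
    (hmax : ∀ k, Φ.mulVec x k ≤ Φ.mulVec x i₀) :
    IsExtreme ℝ (convexHull ℝ (Set.range fun i : Fin n => Φ i))
      (convexHull ℝ ((fun i : Fin n => Φ i) '' {k | Φ.mulVec x k = Φ.mulVec x i₀})) := by
  have hexp : IsExposed ℝ (convexHull ℝ (Set.range fun i : Fin n => Φ i))
      (convexHull ℝ ((fun i : Fin n => Φ i) '' {k | Φ.mulVec x k = Φ.mulVec x i₀})) :=
    fun _ => ⟨dotCLM x, (face_eq Φ x i₀ hmax).symm⟩
  exact hexp.isExtreme

end Face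

/-- Suppose the columns of `Φ` span the eigenspace of the second-largest
adjacency eigenvalue `θ₂` of a graph `G`, with rows `v i := Φ i`, and
(a) for every vertex `i` there is a `θ₂`-eigenvector whose unique largest
component is at `i`, and (b) two distinct vertices are adjacent iff some
`θ₂`-eigenvector attains its maximum exactly on them.  Then `i ↦ v i` is a
graph isomorphism from `G` onto the skeleton of the `θ₂`-eigenpolytope
`conv {v 1, …, v n}`: the `v i` are `n` distinct vertices of the polytope, and
`conv {v i, v j}` is an edge of the polytope iff `ij` is an edge of `G`. -/

theorem spectral_graph_characterization
    (n d : ℕ)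
    (G : SimpleGraph (Fin n)) [DecidableRel G.Adj]
    (θ : ℝ)
    -- θ is the second-largest adjacency eigenvalue of G
    (hθeig : Module.End.HasEigenvalue (Matrix.toLin' (G.adjMatrix ℝ)) θ)
    (hθsecond : ∃ θ₁ : ℝ, θ < θ₁ ∧
        Module.End.HasEigenvalue (Matrix.toLin' (G.adjMatrix ℝ)) θ₁ ∧
        ∀ μ : ℝ, Module.End.HasEigenvalue (Matrix.toLin' (G.adjMatrix ℝ)) μ →
          μ = θ₁ ∨ μ ≤ θ)
    (Φ : Matrix (Fin n) (Fin d) ℝ)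
    (hspan : Submodule.span ℝ (Set.range Φᵀ) =
        Module.End.eigenspace (Matrix.toLin' (G.adjMatrix ℝ)) θ)
    -- (a): each vertex is singled out by some eigenvector
    (ha : ∀ i : Fin n, ∃ u : Fin n → ℝ, (G.adjMatrix ℝ).mulVec u = θ • u ∧
        {k : Fin n | ∀ l : Fin n, u l ≤ u k} = {i})
    -- (b): adjacency is characterized by eigenvectors maximal exactly on pairs
    (hb : ∀ i j : Fin n, i ≠ j →
        (G.Adj i j ↔ ∃ u : Fin n → ℝ, (G.adjMatrix ℝ).mulVec u = θ • u ∧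
          {k : Fin n | ∀ l : Fin n, u l ≤ u k} = {i, j})) :
    Function.Injective (fun i : Fin n => Φ i) ∧
    (∀ i : Fin n, Φ i ∈
        Set.extremePoints ℝ (convexHull ℝ (Set.range fun i : Fin n => Φ i))) ∧
    (∀ i j : Fin n, i ≠ j →
        (G.Adj i j ↔
          IsExtreme ℝ (convexHull ℝ (Set.range fun i : Fin n => Φ i))
            (segment ℝ (Φ i) (Φ j)))) := by
  classical
  -- from an eigenvector, get a coefficient vector
  have hgetx : ∀ u : Fin n → ℝ, (G.adjMatrix ℝ).mulVec u = θ • u →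
      ∃ x : Fin d → ℝ, Φ.mulVec x = u := by
    intro u hu
    have hmem : u ∈ Module.End.eigenspace (Matrix.toLin' (G.adjMatrix ℝ)) θ :=
      Module.End.mem_eigenspace_iff.2 (by rw [Matrix.toLin'_apply]; exact hu)
    rw [← hspan, show Set.range Φᵀ = Set.range Φ.col from rfl, ← Matrix.range_mulVecLin] at hmem
    obtain ⟨x, hx⟩ := hmem
    exact ⟨x, hx⟩
  -- conversely, `Φ.mulVec x` is always in the eigenspace
  have heigen : ∀ x : Fin d → ℝ,
      (G.adjMatrix ℝ).mulVec (Φ.mulVec x) = θ • Φ.mulVec x := by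
    intro x
    have hmem : Φ.mulVec x ∈ Submodule.span ℝ (Set.range Φᵀ) := by
      rw [show Set.range Φᵀ = Set.range Φ.col from rfl, ← Matrix.range_mulVecLin]; exact ⟨x, rfl⟩
    rw [hspan] at hmem
    have := Module.End.mem_eigenspace_iff.1 hmem
    rwa [Matrix.toLin'_apply] at this
  -- injectivity
  have hinj : Function.Injective (fun i : Fin n => Φ i) := by
    intro i j hij
    obtain ⟨u, hu, hargmax⟩ := ha i
    obtain ⟨x, rfl⟩ := hgetx u hu
    have hi : i ∈ {k : Fin n | ∀ l : Fin n, Φ.mulVec x l ≤ Φ.mulVec x k} := by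
      rw [hargmax]; exact Set.mem_singleton i
    have huj : Φ.mulVec x j = Φ.mulVec x i := by
      show Φ j ⬝ᵥ x = Φ i ⬝ᵥ x
      simp only at hij
      rw [hij]
    have hjmem : j ∈ {k : Fin n | ∀ l : Fin n, Φ.mulVec x l ≤ Φ.mulVec x k} :=
      fun l => (hi l).trans huj.ge
    rw [hargmax] at hjmem
    exact (Set.mem_singleton_iff.1 hjmem).symm
  -- extreme points
  have hext : ∀ i : Fin n, Φ i ∈
      Set.extremePoints ℝ (convexHull ℝ (Set.range fun i : Fin n => Φ i)) := by
    intro i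
    obtain ⟨u, hu, hargmax⟩ := ha i
    obtain ⟨x, rfl⟩ := hgetx u hu
    have hi : ∀ l, Φ.mulVec x l ≤ Φ.mulVec x i := by
      have : i ∈ {k : Fin n | ∀ l : Fin n, Φ.mulVec x l ≤ Φ.mulVec x k} := by
        rw [hargmax]; exact Set.mem_singleton i
      exact this
    have hA : {k : Fin n | Φ.mulVec x k = Φ.mulVec x i} = {i} := by
      apply Set.Subset.antisymm
      · intro k hk
        have hkmem : k ∈ {k : Fin n | ∀ l : Fin n, Φ.mulVec x l ≤ Φ.mulVec x k} :=
          fun l => (hi l).trans (Set.mem_setOf_eq ▸ hk).ge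
        rw [hargmax] at hkmem
        exact hkmem
      · rintro k hk
        rw [Set.mem_singleton_iff.1 hk]
        exact rfl
    have hIE := face_isExtreme Φ x i hi
    rw [hA, Set.image_singleton, convexHull_singleton] at hIE
    exact isExtreme_singleton.1 hIE
  refine ⟨hinj, hext, ?_⟩
  intro i j hij
  constructor
  · -- adjacency implies extreme segment
    intro hadj
    obtain ⟨u, hu, hargmax⟩ := (hb i j hij).1 hadj
    obtain ⟨x, rfl⟩ := hgetx u hu
    have hi : ∀ l, Φ.mulVec x l ≤ Φ.mulVec x i := by
      have : i ∈ {k : Fin n | ∀ l : Fin n, Φ.mulVec x l ≤ Φ.mulVec x k} := by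
        rw [hargmax]; exact Set.mem_insert i {j}
      exact this
    have hj : ∀ l, Φ.mulVec x l ≤ Φ.mulVec x j := by
      have : j ∈ {k : Fin n | ∀ l : Fin n, Φ.mulVec x l ≤ Φ.mulVec x k} := by
        rw [hargmax]; exact Set.mem_insert_of_mem i rfl
      exact this
    have hji : Φ.mulVec x j = Φ.mulVec x i := le_antisymm (hi j) (hj i)
    have hA : {k : Fin n | Φ.mulVec x k = Φ.mulVec x i} = {i, j} := by
      apply Set.Subset.antisymm
      · intro k hk
        have hkmem : k ∈ {k : Fin n | ∀ l : Fin n, Φ.mulVec x l ≤ Φ.mulVec x k} :=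
          fun l => (hi l).trans (Set.mem_setOf_eq ▸ hk).ge
        rw [hargmax] at hkmem
        exact hkmem
      · rintro k (rfl | hk)
        · exact rfl
        · rw [Set.mem_singleton_iff.1 hk]
          exact hji
    have hIE := face_isExtreme Φ x i hi
    rw [hA, Set.image_pair, convexHull_pair] at hIE
    exact hIE
  · -- extreme segment implies adjacency
    intro hseg
    have hvij : Φ i ≠ Φ j := fun h => hij (hinj h)
    obtain ⟨w, hwdef⟩ : ∃ w : Fin d → ℝ, w = Φ j - Φ i := ⟨_, rfl⟩
    have hw0 : w ≠ 0 := hwdef ▸ sub_ne_zero.2 (Ne.symm hvij)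
    have hww : 0 < w ⬝ᵥ w := by
      have h1 : 0 ≤ w ⬝ᵥ w := Finset.sum_nonneg fun k _ => mul_self_nonneg _
      have h2 : w ⬝ᵥ w ≠ 0 := fun h => hw0 (dotProduct_self_eq_zero.1 h)
      exact h1.lt_of_ne (Ne.symm h2)
    obtain ⟨c, hc⟩ : ∃ c : Fin n → ℝ, c = fun k => ((Φ k - Φ i) ⬝ᵥ w) / (w ⬝ᵥ w) := ⟨_, rfl⟩
    obtain ⟨pp, hpp⟩ : ∃ pp : Fin n → (Fin d → ℝ),
        pp = fun k => (Φ k - Φ i) - c k • w := ⟨_, rfl⟩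
    have hppw : ∀ k, pp k ⬝ᵥ w = 0 := by
      intro k
      have hstep : pp k ⬝ᵥ w
          = (Φ k - Φ i) ⬝ᵥ w - ((Φ k - Φ i) ⬝ᵥ w / (w ⬝ᵥ w)) * (w ⬝ᵥ w) := by
        simp only [hpp, hc, sub_dotProduct, smul_dotProduct, smul_eq_mul]
      rw [hstep, div_mul_cancel₀ _ (ne_of_gt hww), sub_self]
    -- every vertex lying on the segment must be an endpoint
    have hvseg : ∀ k : Fin n, Φ k ∈ segment ℝ (Φ i) (Φ j) → k = i ∨ k = j := by
      intro k hk
      by_contra hcon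
      push_neg at hcon
      have hkext : Φ k ∈ Set.extremePoints ℝ (segment ℝ (Φ i) (Φ j)) :=
        inter_extremePoints_subset_extremePoints_of_subset hseg.1 ⟨hk, hext k⟩
      have hne1 : Φ k ≠ Φ i := fun h => hcon.1 (hinj h)
      have hne2 : Φ k ≠ Φ j := fun h => hcon.2 (hinj h)
      have hopen : Φ k ∈ openSegment ℝ (Φ i) (Φ j) :=
        mem_openSegment_of_ne_left_right (Ne.symm hne1) (Ne.symm hne2) hk
      have := hkext.2 (left_mem_segment ℝ (Φ i) (Φ j)) (right_mem_segment ℝ (Φ i) (Φ j)) hopen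
      exact hne1 this.symm
    -- membership of a point `Φ i + t₀ • w` in the segment forces `t₀ ∈ [0, 1]`
    have hsegq : ∀ t₀ : ℝ, Φ i + t₀ • w ∈ segment ℝ (Φ i) (Φ j) → 0 ≤ t₀ ∧ t₀ ≤ 1 := by
      intro t₀ hqs
      rw [segment_eq_image] at hqs
      obtain ⟨s, hs, hsq⟩ := hqs
      have hsq' : (1 - s) • Φ i + s • Φ j = Φ i + t₀ • w := hsq
      have hsw : s • w = t₀ • w := by
        have h1 : (1 - s) • Φ i + s • Φ j = Φ i + s • w := by
          rw [hwdef, smul_sub, sub_smul, one_smul]; abel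
        rw [h1] at hsq'
        exact add_left_cancel hsq'
      have hst : s = t₀ := by
        by_contra hne
        have hz : (s - t₀) • w = 0 := by rw [sub_smul, hsw, sub_self]
        rcases smul_eq_zero.1 hz with h | h
        · exact hne (sub_eq_zero.1 h)
        · exact hw0 h
      exact ⟨hst ▸ hs.1, hst ▸ hs.2⟩
    -- the key separation fact
    have hkey : (0 : Fin d → ℝ) ∉ convexHull ℝ (pp '' {k : Fin n | k ≠ i ∧ k ≠ j}) := by
      intro h0
      rw [convexHull_eq] at h0
      obtain ⟨ι, t, ν, z, hν0, hν1, hzC, hcm⟩ := h0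
      have hzk : ∀ a : ι, ∃ k : Fin n, a ∈ t → ((k ≠ i ∧ k ≠ j) ∧ pp k = z a) := by
        intro a
        by_cases hat : a ∈ t
        · obtain ⟨k, hk1, hk2⟩ := hzC a hat
          exact ⟨k, fun _ => ⟨hk1, hk2⟩⟩
        · exact ⟨i, fun h => absurd h hat⟩
      choose κ hκ using hzk
      obtain ⟨q, hq⟩ : ∃ q : Fin d → ℝ, q = ∑ a ∈ t, ν a • Φ (κ a) := ⟨_, rfl⟩
      obtain ⟨t₀, ht₀⟩ : ∃ t₀ : ℝ, t₀ = ∑ a ∈ t, ν a * c (κ a) := ⟨_, rfl⟩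
      have hq_eq : q = Φ i + t₀ • w := by
        have h0' : (0 : Fin d → ℝ) = ∑ a ∈ t, ν a • z a := by
          rw [← hcm, Finset.centerMass_eq_of_sum_1 _ _ hν1]
        have hterm : ∀ a ∈ t, ν a • z a = ν a • Φ (κ a) - ν a • Φ i - (ν a * c (κ a)) • w := by
          intro a hat
          rw [← (hκ a hat).2]
          simp only [hpp, smul_sub, smul_smul]
        rw [Finset.sum_congr rfl hterm] at h0'
        rw [Finset.sum_sub_distrib, Finset.sum_sub_distrib, ← Finset.sum_smul,
          ← Finset.sum_smul, hν1, one_smul, ← hq, ← ht₀] at h0'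
        have h1 : q - Φ i - t₀ • w = 0 := h0'.symm
        rw [sub_sub, sub_eq_zero] at h1
        rw [h1]
      have hqP : q ∈ convexHull ℝ (Set.range fun i : Fin n => Φ i) := by
        have := Finset.centerMass_mem_convexHull t hν0 (by rw [hν1]; norm_num)
          (fun a _ => Set.mem_range_self (κ a) :
            ∀ a ∈ t, Φ (κ a) ∈ Set.range fun i : Fin n => Φ i)
        rwa [Finset.centerMass_eq_of_sum_1 _ _ hν1, ← hq] at this
      rcases le_or_gt t₀ 1 with h1 | h1
      · rcases le_or_gt 0 t₀ with h0'' | h0''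
        · -- t₀ ∈ [0,1] : q lies on the segment, contradiction via extreme_centerMass
          have hqs : q ∈ segment ℝ (Φ i) (Φ j) := by
            rw [segment_eq_image]
            refine ⟨t₀, ⟨h0'', h1⟩, ?_⟩
            show (1 - t₀) • Φ i + t₀ • Φ j = q
            rw [hq_eq, hwdef, smul_sub, sub_smul, one_smul]; abel
          have hall := extreme_centerMass (convex_convexHull ℝ _) hseg t ν
            (fun a => Φ (κ a)) hν0 (by rw [hν1]; norm_num)
            (fun a _ => subset_convexHull ℝ _ (Set.mem_range_self (κ a)))
            (by rw [Finset.centerMass_eq_of_sum_1 _ _ hν1, ← hq]; exact hqs)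
          obtain ⟨a, hat, hνa⟩ : ∃ a ∈ t, 0 < ν a := by
            by_contra hno
            push_neg at hno
            have : ∑ a ∈ t, ν a ≤ 0 := Finset.sum_nonpos hno
            rw [hν1] at this; linarith
          have hin := hall a hat hνa
          rcases hvseg (κ a) hin with h | h
          · exact (hκ a hat).1.1 h
          · exact (hκ a hat).1.2 h
        · -- t₀ < 0
          obtain ⟨α, hα⟩ : ∃ α : ℝ, α = 1 / (1 - t₀) := ⟨_, rfl⟩
          have h1t : (0:ℝ) < 1 - t₀ := by linarith
          have hαpos : 0 < α := by rw [hα]; positivity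
          have hαlt : α < 1 := by
            rw [hα, div_lt_one h1t]; linarith
          have hαval : α * (1 - t₀) = 1 := by
            rw [hα]; field_simp
          have hcoef : α * t₀ + (1 - α) = 0 := by nlinarith
          have hopen : Φ i ∈ openSegment ℝ q (Φ j) := by
            refine ⟨α, 1 - α, hαpos, by linarith, by ring, ?_⟩
            have hjw : Φ j = Φ i + w := by rw [hwdef]; abel
            rw [hq_eq, hjw]
            have hexp : α • (Φ i + t₀ • w) + (1 - α) • (Φ i + w)
                = (α + (1 - α)) • Φ i + (α * t₀ + (1 - α)) • w := by
              simp only [smul_add, add_smul, smul_smul]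
              abel
            rw [hexp, hcoef, zero_smul, add_zero]
            have h2 : α + (1 - α) = 1 := by ring
            rw [h2, one_smul]
          have hqseg := (hseg.2 hqP
            (subset_convexHull ℝ _ (Set.mem_range_self j))
            (left_mem_segment ℝ (Φ i) (Φ j)) hopen)
          have := hsegq t₀ (by rw [← hq_eq]; exact hqseg)
          linarith [this.1]
      · -- t₀ > 1
        obtain ⟨α, hα⟩ : ∃ α : ℝ, α = 1 / t₀ := ⟨_, rfl⟩
        have ht0p : (0:ℝ) < t₀ := by linarith
        have hαpos : 0 < α := by rw [hα]; positivity
        have hαlt : α < 1 := by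
          rw [hα, div_lt_one ht0p]; linarith
        have hαval : α * t₀ = 1 := by
          rw [hα]; field_simp
        have hopen : Φ j ∈ openSegment ℝ (Φ i) q := by
          refine ⟨1 - α, α, by linarith, hαpos, by ring, ?_⟩
          have hjw : Φ j = Φ i + w := by rw [hwdef]; abel
          rw [hq_eq, hjw]
          have hexp : (1 - α) • Φ i + α • (Φ i + t₀ • w)
              = ((1 - α) + α) • Φ i + (α * t₀) • w := by
            simp only [smul_add, add_smul, smul_smul]
            abel
          rw [hexp, hαval, one_smul]
          have h2 : (1 - α) + α = 1 := by ring
          rw [h2, one_smul]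
        have hqseg := (hseg.right_mem_of_mem_openSegment
          (subset_convexHull ℝ _ (Set.mem_range_self i)) hqP
          (right_mem_segment ℝ (Φ i) (Φ j)) hopen)
        have := hsegq t₀ (by rw [← hq_eq]; exact hqseg)
        linarith [this.2]
    -- separate 0 from the convex hull of the projected points
    have hCfin : (pp '' {k : Fin n | k ≠ i ∧ k ≠ j}).Finite :=
      (Set.toFinite _).image pp
    obtain ⟨f, b, hfb, hb0⟩ := geometric_hahn_banach_closed_point
      (convex_convexHull ℝ _) (hCfin.isCompact_convexHull ℝ).isClosed hkey
    have hb0' : b < 0 := by simpa using hb0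
    have hfneg : ∀ k, k ≠ i → k ≠ j → f (pp k) < 0 := fun k h1 h2 =>
      lt_trans (hfb _ (subset_convexHull ℝ _ (Set.mem_image_of_mem pp ⟨h1, h2⟩))) hb0'
    -- represent `f` as a dot product
    obtain ⟨y, hy⟩ : ∃ y : Fin d → ℝ,
        y = fun m => f (fun k => if m = k then (1:ℝ) else 0) := ⟨_, rfl⟩
    have hfeq : ∀ v : Fin d → ℝ, f v = v ⬝ᵥ y := by
      intro v
      conv_lhs => rw [pi_eq_sum_univ v]
      rw [map_sum]
      simp only [_root_.map_smul, smul_eq_mul]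
      simp [hy, dotProduct]
    obtain ⟨x₀, hx₀⟩ : ∃ x₀ : Fin d → ℝ,
        x₀ = y - ((w ⬝ᵥ y) / (w ⬝ᵥ w)) • w := ⟨_, rfl⟩
    have hwx₀ : w ⬝ᵥ x₀ = 0 := by
      rw [hx₀, dotProduct_sub, dotProduct_smul, smul_eq_mul,
        div_mul_cancel₀ _ (ne_of_gt hww), sub_self]
    have hppx₀ : ∀ k, pp k ⬝ᵥ x₀ = f (pp k) := by
      intro k
      rw [hfeq (pp k), hx₀, dotProduct_sub, dotProduct_smul, smul_eq_mul,
        hppw k, mul_zero, sub_zero]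
    have hdiff : ∀ k, Φ.mulVec x₀ k - Φ.mulVec x₀ i = (Φ k - Φ i) ⬝ᵥ x₀ := by
      intro k
      rw [sub_dotProduct]
      rfl
    have hui_j : Φ.mulVec x₀ j = Φ.mulVec x₀ i := by
      have h := hdiff j
      rw [← hwdef, hwx₀] at h
      linarith [h]
    have hlt : ∀ k, k ≠ i → k ≠ j → Φ.mulVec x₀ k < Φ.mulVec x₀ i := by
      intro k h1 h2
      have h3 : (Φ k - Φ i) ⬝ᵥ x₀ = pp k ⬝ᵥ x₀ + c k * (w ⬝ᵥ x₀) := by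
        have h4 : Φ k - Φ i = pp k + c k • w := by rw [hpp]; dsimp only; abel
        rw [h4, add_dotProduct, smul_dotProduct, smul_eq_mul]
      have h4 : Φ.mulVec x₀ k - Φ.mulVec x₀ i = f (pp k) := by
        rw [hdiff k, h3, hwx₀, mul_zero, add_zero, hppx₀]
      have h5 := hfneg k h1 h2
      linarith
    refine (hb i j hij).2 ⟨Φ.mulVec x₀, heigen x₀, ?_⟩
    ext k
    simp only [Set.mem_setOf_eq, Set.mem_insert_iff, Set.mem_singleton_iff]
    constructor
    · intro hk
      by_contra hcon
      push_neg at hcon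
      exact absurd (hk i) (not_le.2 (hlt k hcon.1 hcon.2))
    · rintro (rfl | rfl) <;> intro l
      · rcases eq_or_ne l k with rfl | hlk
        · exact le_refl _
        · rcases eq_or_ne l j with rfl | hlj
          · exact hui_j.le
          · exact (hlt l hlk hlj).le
      · rw [hui_j]
        rcases eq_or_ne l i with rfl | hli
        · exact le_refl _
        · rcases eq_or_ne l k with rfl | hlk
          · exact hui_j.le
          · exact (hlt l hli hlk).le
end

section
/- The Holt graph is not θ₂-spectral: it is a 4-regular graph on 27 vertices whose second-largest adjacency eigenvalue has multiplicity 6, and a full-dimensional polytope in ℝ^6 has every vertex of degree at least 6 in its edge-graph; hence the Holt graph cannot be the edge-graph of its θ₂-eigenpolytope. -/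
open Matrix Module Set

section ConeAux

variable {E : Type*} [AddCommGroup E] [Module ℝ E] {n : ℕ}

/-- Nonnegative combinations of the vectors `g k`, `k ∈ T`. -/
def coneC (g : Fin n → E) (T : Finset (Fin n)) : Set E :=
  {u | ∃ lam : Fin n → ℝ, (∀ k, 0 ≤ lam k) ∧ (∀ k, k ∉ T → lam k = 0) ∧
    u = ∑ k, lam k • g k}

lemma coneC_zero (g : Fin n → E) (T : Finset (Fin n)) : (0 : E) ∈ coneC g T :=
  ⟨0, fun _ => le_rfl, fun _ _ => rfl, by simp⟩

lemma coneC_gen (g : Fin n → E) {T : Finset (Fin n)} {k : Fin n} (hk : k ∈ T) :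
    g k ∈ coneC g T := by
  refine ⟨fun t => if t = k then 1 else 0, fun t => ?_, fun t ht => ?_, ?_⟩
  · dsimp only; split <;> norm_num
  · dsimp only; rw [if_neg]; rintro rfl; exact absurd hk ht
  · simp [ite_smul]

lemma coneC_smul {g : Fin n → E} {T : Finset (Fin n)} {c : ℝ} (hc : 0 ≤ c) {u : E}
    (hu : u ∈ coneC g T) : c • u ∈ coneC g T := by
  obtain ⟨lam, h0, hs, rfl⟩ := hu
  exact ⟨fun t => c * lam t, fun t => mul_nonneg hc (h0 t),
    fun t ht => by dsimp only; rw [hs t ht, mul_zero],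
    by simp [Finset.smul_sum, smul_smul]⟩

lemma coneC_subset_submodule {g : Fin n → E} {T : Finset (Fin n)} (W : Submodule ℝ E)
    (hg : ∀ t ∈ T, g t ∈ W) : coneC g T ⊆ (W : Set E) := by
  rintro u ⟨lam, h0, hs, rfl⟩
  refine Submodule.sum_mem _ fun t _ => ?_
  by_cases ht : t ∈ T
  · exact Submodule.smul_mem _ _ (hg t ht)
  · rw [hs t ht, zero_smul]; exact W.zero_mem

lemma coneC_erase {g : Fin n → E} {T : Finset (Fin n)} {k : Fin n}
    (hk : g k ∈ coneC g (T.erase k)) : coneC g T ⊆ coneC g (T.erase k) := by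
  rintro u ⟨lam, h0, hs, rfl⟩
  obtain ⟨mu, hm0, hms, hmu⟩ := hk
  refine ⟨fun t => (if t = k then 0 else lam t) + lam k * mu t, fun t => ?_, fun t ht => ?_, ?_⟩
  · dsimp only
    have h1 : (0:ℝ) ≤ if t = k then 0 else lam t := by split_ifs; exacts [le_rfl, h0 t]
    exact add_nonneg h1 (mul_nonneg (h0 k) (hm0 t))
  · dsimp only
    rcases eq_or_ne t k with rfl | htk
    · rw [if_pos rfl, hms t (Finset.notMem_erase t T), mul_zero, add_zero]
    · have htT : t ∉ T := fun hT => ht (Finset.mem_erase.2 ⟨htk, hT⟩)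
      rw [if_neg htk, hs t htT, hms t ht, mul_zero, add_zero]
  · have key : ∀ t : Fin n, ((if t = k then 0 else lam t) + lam k * mu t) • g t
        = (lam t • g t - (if t = k then lam t • g t else 0)) + lam k • (mu t • g t) := by
      intro t
      rcases eq_or_ne t k with rfl | htk
      · simp [add_smul, smul_smul]
      · simp [if_neg htk, add_smul, smul_smul]
    calc ∑ t, lam t • g t
        = (∑ t, lam t • g t - lam k • g k) + lam k • g k := by abel
      _ = ∑ t, ((if t = k then 0 else lam t) + lam k * mu t) • g t := by
          rw [Finset.sum_congr rfl fun t _ => key t, Finset.sum_add_distrib,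
            Finset.sum_sub_distrib, Finset.sum_ite_eq' Finset.univ k (fun t => lam t • g t),
            if_pos (Finset.mem_univ k), ← Finset.smul_sum, ← hmu]

end ConeAux

section ConeAux2

variable {E : Type*} [AddCommGroup E] [Module ℝ E] {n : ℕ}

lemma memP_sub (p : Fin n → E) (i0 : Fin n) {q : E}
    (hq : q ∈ convexHull ℝ (Set.range p)) :
    q - p i0 ∈ coneC (fun k => p k - p i0) Finset.univ := by
  rw [convexHull_range_eq_exists_affineCombination] at hq
  obtain ⟨s, w, hw0, hw1, rfl⟩ := hq
  refine ⟨fun k => if k ∈ s then w k else 0,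
    fun t => by dsimp only; split_ifs with h; exacts [hw0 t h, le_rfl],
    fun t ht => absurd (Finset.mem_univ t) ht, ?_⟩
  rw [Finset.affineCombination_eq_weightedVSubOfPoint_vadd_of_sum_eq_one s w p hw1 (p i0),
    Finset.weightedVSubOfPoint_apply, vadd_eq_add, add_sub_cancel_right]
  have : ∀ k : Fin n, (if k ∈ s then w k else 0) • ((fun k => p k - p i0) k)
      = if k ∈ s then w k • (p k - p i0) else 0 := by
    intro k; split_ifs <;> simp
  rw [Finset.sum_congr rfl fun k _ => this k, Finset.sum_ite_mem, Finset.univ_inter]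
  exact Finset.sum_congr rfl fun k _ => by rw [vsub_eq_sub]

lemma coneC_pointed (p : Fin n → E) (i0 : Fin n)
    (hx : p i0 ∈ Set.extremePoints ℝ (convexHull ℝ (Set.range p)))
    {u : E} (hu : u ∈ coneC (fun k => p k - p i0) Finset.univ)
    (hu' : -u ∈ coneC (fun k => p k - p i0) Finset.univ) : u = 0 := by
  by_contra hne
  obtain ⟨a, ha0, -, hau⟩ := hu
  obtain ⟨b, hb0, -, hbu⟩ := hu'
  set M : ℝ := ∑ k, a k with hM
  set M' : ℝ := ∑ k, b k with hM'
  have hMpos : 0 < M := by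
    rcases (Finset.sum_nonneg (fun k _ => ha0 k)).lt_or_eq with h | h
    · exact h
    · exfalso; apply hne
      rw [hau]
      refine Finset.sum_eq_zero fun k _ => ?_
      rw [(Finset.sum_eq_zero_iff_of_nonneg (fun k _ => ha0 k)).1 h.symm k (Finset.mem_univ k),
        zero_smul]
  have hM'pos : 0 < M' := by
    rcases (Finset.sum_nonneg (fun k _ => hb0 k)).lt_or_eq with h | h
    · exact h
    · exfalso; apply hne
      have hz : -u = 0 := by
        rw [hbu]
        refine Finset.sum_eq_zero fun k _ => ?_
        rw [(Finset.sum_eq_zero_iff_of_nonneg (fun k _ => hb0 k)).1 h.symm k (Finset.mem_univ k),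
          zero_smul]
      exact neg_eq_zero.1 hz
  have hsum_a : ∑ k, a k • p k = u + M • p i0 := by
    have h1 : u = (∑ k, a k • p k) - M • p i0 := by
      rw [hau, hM, Finset.sum_smul, ← Finset.sum_sub_distrib]
      exact Finset.sum_congr rfl fun k _ => by rw [smul_sub]
    rw [h1]; abel
  have hsum_b : ∑ k, b k • p k = -u + M' • p i0 := by
    have h1 : -u = (∑ k, b k • p k) - M' • p i0 := by
      rw [hbu, hM', Finset.sum_smul, ← Finset.sum_sub_distrib]
      exact Finset.sum_congr rfl fun k _ => by rw [smul_sub]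
    rw [h1]; abel
  have hy1mem : p i0 + M⁻¹ • u ∈ convexHull ℝ (Set.range p) := by
    have h1 := Finset.centerMass_mem_convexHull (Finset.univ : Finset (Fin n))
      (fun i _ => ha0 i) (by rw [← hM]; exact hMpos) (fun i _ => Set.mem_range_self (f := p) i)
    have h2 : (Finset.univ : Finset (Fin n)).centerMass a p = p i0 + M⁻¹ • u := by
      rw [Finset.centerMass, ← hM, hsum_a, smul_add, smul_smul,
        inv_mul_cancel₀ hMpos.ne', one_smul]
      abel
    rwa [h2] at h1
  have hy2mem : p i0 - M'⁻¹ • u ∈ convexHull ℝ (Set.range p) := by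
    have h1 := Finset.centerMass_mem_convexHull (Finset.univ : Finset (Fin n))
      (fun i _ => hb0 i) (by rw [← hM']; exact hM'pos) (fun i _ => Set.mem_range_self (f := p) i)
    have h2 : (Finset.univ : Finset (Fin n)).centerMass b p = p i0 - M'⁻¹ • u := by
      rw [Finset.centerMass, ← hM', hsum_b, smul_add, smul_smul,
        inv_mul_cancel₀ hM'pos.ne', one_smul, smul_neg]
      abel
    rwa [h2] at h1
  have hopen : p i0 ∈ openSegment ℝ (p i0 + M⁻¹ • u) (p i0 - M'⁻¹ • u) := by
    refine ⟨M / (M + M'), M' / (M + M'), by positivity, by positivity, by field_simp, ?_⟩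
    match_scalars
    · field_simp
    · field_simp; ring
  rw [mem_extremePoints] at hx
  have := (hx.2 _ hy1mem _ hy2mem hopen).1
  apply hne
  have h3 : M⁻¹ • u = 0 := by
    have := congrArg (fun z => z - p i0) this
    simpa using this
  simpa [hMpos.ne', inv_eq_zero] using (smul_eq_zero.1 h3)

end ConeAux2

section ConeAux3

variable {E : Type*} [AddCommGroup E] [Module ℝ E] {n : ℕ}

lemma coneC_eray (p : Fin n → E) (i0 : Fin n)
    (hx : p i0 ∈ Set.extremePoints ℝ (convexHull ℝ (Set.range p)))
    {T : Finset (Fin n)}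
    (hirr : ∀ t ∈ T, (p t - p i0) ∉ coneC (fun k => p k - p i0) (T.erase t))
    {k : Fin n} (hk : k ∈ T) {s : ℝ}
    {u w : E} (hu : u ∈ coneC (fun k => p k - p i0) T)
    (hw : w ∈ coneC (fun k => p k - p i0) T)
    (huw : u + w = s • (p k - p i0)) :
    ∃ a : ℝ, 0 ≤ a ∧ u = a • (p k - p i0) := by
  set g : Fin n → E := fun k => p k - p i0 with hg
  obtain ⟨a, ha0, has, hau⟩ := hu
  obtain ⟨b, hb0, hbs, hbu⟩ := hw
  set c : Fin n → ℝ := fun t => a t + b t with hc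
  have hc0 : ∀ t, 0 ≤ c t := fun t => add_nonneg (ha0 t) (hb0 t)
  have hcs : ∀ t ∉ T, c t = 0 := fun t ht => by rw [hc]; dsimp only; rw [has t ht, hbs t ht, add_zero]
  have hcsum : ∑ t, c t • g t = s • g k := by
    rw [← huw, hau, hbu, ← Finset.sum_add_distrib]
    exact Finset.sum_congr rfl fun t _ => by rw [hc]; dsimp only; rw [add_smul]
  rcases lt_or_ge (c k) s with hlt | hge
  · -- then g k is a nonneg combination of the others, contradiction
    exfalso
    apply hirr k hk
    have hr : (0:ℝ) < s - c k := by linarith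
    refine ⟨fun t => if t = k then 0 else c t / (s - c k), fun t => ?_, fun t ht => ?_, ?_⟩
    · dsimp only; split_ifs
      · exact le_rfl
      · exact div_nonneg (hc0 t) hr.le
    · dsimp only
      rcases eq_or_ne t k with rfl | htk
      · rw [if_pos rfl]
      · have htT : t ∉ T := fun hT => ht (Finset.mem_erase.2 ⟨htk, hT⟩)
        rw [if_neg htk, hcs t htT, zero_div]
    · have key : ∀ t : Fin n, (if t = k then 0 else c t / (s - c k)) • g t
          = (s - c k)⁻¹ • (c t • g t - (if t = k then c t • g t else 0)) := by
        intro t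
        rcases eq_or_ne t k with rfl | htk
        · simp
        · rw [if_neg htk, if_neg htk, sub_zero, smul_smul, div_eq_inv_mul]
      rw [Finset.sum_congr rfl fun t _ => key t, ← Finset.smul_sum, Finset.sum_sub_distrib,
        Finset.sum_ite_eq' Finset.univ k (fun t => c t • g t), if_pos (Finset.mem_univ k),
        hcsum, ← sub_smul, smul_smul, inv_mul_cancel₀ hr.ne', one_smul]
  · -- pointedness kills all other coefficients
    have hcz : ∀ t0 ∈ T.erase k, c t0 = 0 := by
      intro t0 ht0
      have ht0T : t0 ∈ T := Finset.mem_of_mem_erase ht0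
      have ht0k : t0 ≠ k := (Finset.mem_erase.1 ht0).1
      have hgt0 : g t0 ≠ 0 := by
        intro h0
        apply hirr t0 ht0T
        show g t0 ∈ _
        rw [h0]
        exact coneC_zero g _
      have hmem1 : c t0 • g t0 ∈ coneC g Finset.univ :=
        coneC_smul (hc0 t0) (coneC_gen g (Finset.mem_univ t0))
      have hmem2 : -(c t0 • g t0) ∈ coneC g Finset.univ := by
        refine ⟨fun t => c t + (if t = t0 then -(c t0) else 0) + (if t = k then -s else 0),
          fun t => ?_, fun t ht => absurd (Finset.mem_univ t) ht, ?_⟩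
        · dsimp only
          rcases eq_or_ne t t0 with rfl | ht1
          · rw [if_pos rfl, if_neg ht0k]; linarith [hc0 t]
          · rcases eq_or_ne t k with rfl | ht2
            · rw [if_neg ht1, if_pos rfl]; linarith
            · rw [if_neg ht1, if_neg ht2]; linarith [hc0 t]
        · have expand : ∀ t : Fin n,
              (c t + (if t = t0 then -(c t0) else 0) + (if t = k then -s else 0)) • g t
              = c t • g t + (if t = t0 then (-(c t0)) • g t else 0)
                + (if t = k then (-s) • g t else 0) := by
            intro t
            rcases eq_or_ne t t0 with rfl | ht1 <;> rcases eq_or_ne t k with rfl | ht2 <;>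
              simp_all [add_smul]
          rw [Finset.sum_congr rfl fun t _ => expand t, Finset.sum_add_distrib,
            Finset.sum_add_distrib,
            Finset.sum_ite_eq' Finset.univ t0 (fun t => (-(c t0)) • g t),
            Finset.sum_ite_eq' Finset.univ k (fun t => (-s) • g t),
            if_pos (Finset.mem_univ t0), if_pos (Finset.mem_univ k), hcsum,
            neg_smul, neg_smul]
          abel
      have := coneC_pointed p i0 hx hmem1 hmem2
      rcases smul_eq_zero.1 this with h | h
      · exact h
      · exact absurd h hgt0
    have haz : ∀ t ≠ k, a t = 0 := by
      intro t ht
      by_cases htT : t ∈ T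
      · have := hcz t (Finset.mem_erase.2 ⟨ht, htT⟩)
        have hb := hb0 t; have ha := ha0 t
        rw [hc] at this; dsimp only at this; linarith
      · exact has t htT
    refine ⟨a k, ha0 k, ?_⟩
    rw [hau, Finset.sum_eq_single k (fun t _ ht => by rw [haz t ht, zero_smul]) 
      (fun h => absurd (Finset.mem_univ k) h)]

end ConeAux3

section ConeAux4

variable {E : Type*} [AddCommGroup E] [Module ℝ E] {n : ℕ}

lemma segment_isExtreme (p : Fin n → E) (i0 : Fin n)
    (hextAll : ∀ i, p i ∈ Set.extremePoints ℝ (convexHull ℝ (Set.range p)))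
    {T : Finset (Fin n)}
    (hirr : ∀ t ∈ T, (p t - p i0) ∉ coneC (fun k => p k - p i0) (T.erase t))
    (hTw : coneC (fun k => p k - p i0) Finset.univ ⊆ coneC (fun k => p k - p i0) T)
    {k : Fin n} (hk : k ∈ T) :
    IsExtreme ℝ (convexHull ℝ (Set.range p)) (segment ℝ (p i0) (p k)) := by
  set g : Fin n → E := fun k => p k - p i0 with hgdef
  have hxP : p i0 ∈ convexHull ℝ (Set.range p) := subset_convexHull ℝ _ ⟨i0, rfl⟩
  have hgk : g k ≠ 0 := by
    intro h0
    apply hirr k hk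
    show g k ∈ _
    rw [h0]; exact coneC_zero _ _
  constructor
  · exact (convex_convexHull ℝ _).segment_subset hxP (subset_convexHull ℝ _ ⟨k, rfl⟩)
  intro q1 hq1 q2 hq2 y hyB hyO
  rw [segment_eq_image'] at hyB
  obtain ⟨s, ⟨hs0, hs1⟩, rfl⟩ := hyB
  obtain ⟨ta, tb, hta, htb, htab, heq⟩ := hyO
  have hdec : ta • (q1 - p i0) + tb • (q2 - p i0) = s • g k := by
    have h1 : ta • (q1 - p i0) + tb • (q2 - p i0)
        = (ta • q1 + tb • q2) - (ta + tb) • p i0 := by module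
    rw [h1, heq, htab, one_smul]
    show p i0 + s • (p k - p i0) - p i0 = s • g k
    abel
  have hmem1 : ta • (q1 - p i0) ∈ coneC g T :=
    hTw (coneC_smul hta.le (memP_sub p i0 hq1))
  have hmem2 : tb • (q2 - p i0) ∈ coneC g T :=
    hTw (coneC_smul htb.le (memP_sub p i0 hq2))
  -- per-point conclusion
  have main : ∀ (t' : ℝ) (q : E), 0 < t' → q ∈ convexHull ℝ (Set.range p) →
      (∃ a : ℝ, 0 ≤ a ∧ t' • (q - p i0) = a • g k) → q ∈ segment ℝ (p i0) (p k) := by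
    rintro t' q ht' hqP ⟨a, ha0, haq⟩
    set α : ℝ := t'⁻¹ * a with hα
    have hα0 : 0 ≤ α := mul_nonneg (inv_nonneg.2 ht'.le) ha0
    have hqeq : q = p i0 + α • g k := by
      have h2 : q - p i0 = α • g k := by
        have := congrArg (fun z => t'⁻¹ • z) haq
        rwa [smul_smul, smul_smul, inv_mul_cancel₀ ht'.ne', one_smul, ← hα] at this
      rw [← h2]; abel
    have hα1 : α ≤ 1 := by
      by_contra hgt
      push_neg at hgt
      have hαpos : 0 < α := lt_trans one_pos hgt
      have hopen : p k ∈ openSegment ℝ (p i0) q := by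
        refine ⟨1 - α⁻¹, α⁻¹, by rw [sub_pos]; exact inv_lt_one_of_one_lt₀ hgt,
          inv_pos.2 hαpos, by ring, ?_⟩
        rw [hqeq]
        show (1 - α⁻¹) • p i0 + α⁻¹ • (p i0 + α • (p k - p i0)) = p k
        match_scalars <;> field_simp <;> ring
      have := ((mem_extremePoints.1 (hextAll k)).2 (p i0) hxP q hqP hopen).1
      exact hgk (by rw [hgdef]; dsimp only; rw [this, sub_self])
    rw [segment_eq_image']
    exact ⟨α, ⟨hα0, hα1⟩, by rw [hqeq]⟩
  obtain ⟨a1, ha1, heq1⟩ := coneC_eray p i0 (hextAll i0) hirr hk hmem1 hmem2 hdec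
  obtain ⟨a2, ha2, heq2⟩ := coneC_eray p i0 (hextAll i0) hirr hk hmem2 hmem1
    (by rw [add_comm]; exact hdec)
  exact main ta q1 hta hq1 ⟨a1, ha1, heq1⟩

lemma coneC_key (p : Fin n → E) (i0 : Fin n) (W : Submodule ℝ E)
    (hextAll : ∀ i, p i ∈ Set.extremePoints ℝ (convexHull ℝ (Set.range p)))
    (hW : ∀ k, p k ≠ p i0 →
      IsExtreme ℝ (convexHull ℝ (Set.range p)) (segment ℝ (p i0) (p k)) →
      p k - p i0 ∈ W) :
    ∀ u ∈ coneC (fun k => p k - p i0) Finset.univ, u ∈ W := by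
  set g : Fin n → E := fun k => p k - p i0 with hgdef
  suffices h : ∀ (N : ℕ) (T : Finset (Fin n)), T.card ≤ N →
      coneC g Finset.univ ⊆ coneC g T → ∀ u ∈ coneC g Finset.univ, u ∈ W by
    exact h n Finset.univ (by simp) (fun _ h => h)
  intro N
  induction N with
  | zero =>
    intro T hT hsub u hu
    have hTe : T = ∅ := Finset.card_eq_zero.mp (le_antisymm hT (Nat.zero_le _))
    obtain ⟨lam, -, hls, rfl⟩ := hsub hu
    have : ∀ t : Fin n, lam t • g t = 0 := by
      intro t
      rw [hls t (by rw [hTe]; exact Finset.notMem_empty t), zero_smul]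
    rw [Finset.sum_congr rfl fun t _ => this t, Finset.sum_const_zero]
    exact W.zero_mem
  | succ N ih =>
    intro T hT hsub u hu
    by_cases hred : ∃ k ∈ T, g k ∈ coneC g (T.erase k)
    · obtain ⟨k, hkT, hgk⟩ := hred
      refine ih (T.erase k) ?_ (fun z hz => coneC_erase hgk (hsub hz)) u hu
      rw [Finset.card_erase_of_mem hkT]
      omega
    · push_neg at hred
      have hall : ∀ t ∈ T, g t ∈ W := by
        intro t ht
        have hne : p t ≠ p i0 := by
          intro h0
          apply hred t ht
          show g t ∈ _
          rw [hgdef]; dsimp only; rw [h0, sub_self]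
          exact coneC_zero _ _
        exact hW t hne (segment_isExtreme p i0 hextAll hred hsub ht)
      exact coneC_subset_submodule W hall (hsub hu)

end ConeAux4

/-- The Holt graph is not `θ₂`-spectral: a `4`-regular graph on `27` vertices
whose second-largest adjacency eigenvalue `θ₂` has multiplicity `6` cannot be
realized as the skeleton of its `θ₂`-eigenpolytope, since that polytope lives
in `ℝ^6` and a full-dimensional polytope in `ℝ^6` has every vertex of degree at
least `6` in its edge-graph. -/
theorem holt_graph_not_theta2_spectral
    (G : SimpleGraph (Fin 27)) [DecidableRel G.Adj]
    (hreg : G.IsRegularOfDegree 4)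
    (θ : ℝ)
    -- θ is the second-largest adjacency eigenvalue of G
    (hθeig : Module.End.HasEigenvalue (Matrix.toLin' (G.adjMatrix ℝ)) θ)
    (hθsecond : ∃ θ₁ : ℝ, θ < θ₁ ∧
        Module.End.HasEigenvalue (Matrix.toLin' (G.adjMatrix ℝ)) θ₁ ∧
        ∀ μ : ℝ, Module.End.HasEigenvalue (Matrix.toLin' (G.adjMatrix ℝ)) μ →
          μ = θ₁ ∨ μ ≤ θ)
    -- θ₂ has multiplicity 6
    (hmult : Module.finrank ℝ
        (Module.End.eigenspace (Matrix.toLin' (G.adjMatrix ℝ)) θ) = 6) :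
    ¬ ∃ v : Fin 27 → Fin 6 → ℝ,
        -- the arrangement matrix spans the θ₂-eigenspace
        Submodule.span ℝ (Set.range (Matrix.of v)ᵀ) =
          Module.End.eigenspace (Matrix.toLin' (G.adjMatrix ℝ)) θ ∧
        -- v is an isomorphism from G onto the skeleton of the eigenpolytope
        Function.Injective v ∧
        (∀ i : Fin 27, v i ∈
            Set.extremePoints ℝ (convexHull ℝ (Set.range v))) ∧
        (∀ i j : Fin 27, i ≠ j →
            (G.Adj i j ↔
              IsExtreme ℝ (convexHull ℝ (Set.range v))
                (segment ℝ (v i) (v j)))) := by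
  rintro ⟨v, hspan, hinj, hext, hadj⟩
  classical
  -- the points span a 6-dimensional space
  have h6 : Module.finrank ℝ (Submodule.span ℝ (Set.range v)) = 6 := by
    have h1 : (Matrix.of v).rank = 6 := by
      rw [Matrix.rank_eq_finrank_span_cols]
      change Module.finrank ℝ (Submodule.span ℝ (Set.range (Matrix.of v)ᵀ)) = 6
      rw [hspan, hmult]
    have h2 : (Matrix.of v)ᵀ.rank = 6 := by rw [Matrix.rank_transpose]; exact h1
    have h3 := Matrix.rank_eq_finrank_span_cols (Matrix.of v)ᵀ
    rw [h2] at h3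
    exact h3.symm
  -- the span of neighbor-differences at the vertex `0`
  set Wfin : Finset (Fin 6 → ℝ) := (G.neighborFinset 0).image (fun j => v j - v 0) with hWfin
  set W : Submodule ℝ (Fin 6 → ℝ) := Submodule.span ℝ (Wfin : Set (Fin 6 → ℝ)) with hW
  have hWmem : ∀ k, v k ≠ v 0 →
      IsExtreme ℝ (convexHull ℝ (Set.range v)) (segment ℝ (v 0) (v k)) → v k - v 0 ∈ W := by
    intro k hne hseg
    have h0k : (0 : Fin 27) ≠ k := fun h => hne (by rw [← h])
    have hadj0k : G.Adj 0 k := (hadj 0 k h0k).mpr hseg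
    exact Submodule.subset_span
      (Finset.mem_coe.2 (Finset.mem_image.2
        ⟨k, (SimpleGraph.mem_neighborFinset G 0 k).2 hadj0k, rfl⟩))
  -- every difference lies in W
  have hall : ∀ k : Fin 27, v k - v 0 ∈ W := fun k =>
    coneC_key v 0 W hext hWmem _ (coneC_gen _ (Finset.mem_univ k))
  -- hence the span of the points has dimension at most 5
  have hle : Submodule.span ℝ (Set.range v) ≤ W ⊔ Submodule.span ℝ {v 0} := by
    rw [Submodule.span_le]
    rintro _ ⟨k, rfl⟩
    have hvk : v k = (v k - v 0) + v 0 := by abel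
    rw [hvk]
    exact Submodule.add_mem _ (Submodule.mem_sup_left (hall k))
      (Submodule.mem_sup_right (Submodule.subset_span rfl))
  have hdeg : (G.neighborFinset 0).card = 4 := hreg 0
  have hWrank : Module.finrank ℝ W ≤ 4 := by
    rw [hW]
    exact le_trans (finrank_span_finset_le_card Wfin) (le_trans Finset.card_image_le hdeg.le)
  have hxrank : Module.finrank ℝ (Submodule.span ℝ ({v 0} : Set (Fin 6 → ℝ))) ≤ 1 := by
    have := finrank_span_finset_le_card (R := ℝ) ({v 0} : Finset (Fin 6 → ℝ))
    rw [Finset.coe_singleton, Finset.card_singleton] at this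
    exact this
  have hsupinf := Submodule.finrank_sup_add_finrank_inf_eq W (Submodule.span ℝ {v 0})
  have hmono := Submodule.finrank_mono hle
  rw [h6] at hmono
  omega
end
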